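/- If G is a connected claw-free simple graph with at least two vertices (equivalently, a connected claw-free graph with minimum degree at least 1), then the zero forcing number of G is at most the vertex cover number of G, i.e., Z(G) ≤ β(G). -/

import Mathlib

open SimpleGraph

namespace ZFPaper

variable {V : Type*} {W : Type*}

/-- The degree of a vertex, as the cardinality of its neighbor set. -/
noncomputable def degSet (G : SimpleGraph V) (v : V) : ℕ := (G.neighborSet v).ncard

/-- The maximum degree of a graph. -/
noncomputable def maxDeg (G : SimpleGraph V) : ℕ := sSup {d : ℕ | ∃ v, degSet G v = d}

/-- The minimum degree of a graph. -/
noncomputable def minDeg (G : SimpleGraph V) : ℕ := sInf {d : ℕ | ∃ v, degSet G v = d}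

/-- A set of vertices is a vertex cover if every edge has an endpoint in it. -/
def IsVC (G : SimpleGraph V) (C : Set V) : Prop :=
  ∀ ⦃u w : V⦄, G.Adj u w → u ∈ C ∨ w ∈ C

/-- The vertex cover number β(G). -/
noncomputable def vcNum (G : SimpleGraph V) : ℕ :=
  sInf {m : ℕ | ∃ C : Set V, IsVC G C ∧ C.ncard = m}

/-- A set of vertices is independent if its vertices are pairwise non-adjacent. -/
def IsIndep (G : SimpleGraph V) (S : Set V) : Prop :=
  ∀ ⦃u : V⦄, u ∈ S → ∀ ⦃w : V⦄, w ∈ S → ¬ G.Adj u w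

/-- The independence number α(G). -/
noncomputable def indepNum (G : SimpleGraph V) : ℕ :=
  sSup {m : ℕ | ∃ S : Set V, IsIndep G S ∧ S.ncard = m}

/-- `Forced G B v` means that, starting from the blue set `B`, the vertex `v` is
eventually colored blue by the zero forcing process: a blue vertex with a unique
white neighbor forces that neighbor to become blue. -/
inductive Forced (G : SimpleGraph V) (B : Set V) : V → Prop
  | init : ∀ v ∈ B, Forced G B v
  | force : ∀ u w : V, Forced G B u → G.Adj u w →
      (∀ x : V, G.Adj u x → x ≠ w → Forced G B x) → Forced G B w

/-- A zero forcing set: iterating the forcing process colors every vertex blue. -/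
def IsZFS (G : SimpleGraph V) (B : Set V) : Prop := ∀ v : V, Forced G B v

/-- The zero forcing number Z(G). -/
noncomputable def zfNum (G : SimpleGraph V) : ℕ :=
  sInf {m : ℕ | ∃ B : Set V, IsZFS G B ∧ B.ncard = m}

/-- A graph is claw-free if it has no induced `K_{1,3}`. -/
def ClawFree (G : SimpleGraph V) : Prop :=
  ¬ ∃ (v a b c : V), G.Adj v a ∧ G.Adj v b ∧ G.Adj v c ∧
      a ≠ b ∧ a ≠ c ∧ b ≠ c ∧ ¬ G.Adj a b ∧ ¬ G.Adj a c ∧ ¬ G.Adj b c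

/-- The join `G ∨ H` of two graphs: disjoint union plus all edges between the parts. -/
def joinG (G : SimpleGraph V) (H : SimpleGraph W) : SimpleGraph (V ⊕ W) where
  Adj a b :=
    (∃ u v, a = Sum.inl u ∧ b = Sum.inl v ∧ G.Adj u v) ∨
    (∃ u v, a = Sum.inr u ∧ b = Sum.inr v ∧ H.Adj u v) ∨
    (∃ u v, a = Sum.inl u ∧ b = Sum.inr v) ∨
    (∃ u v, a = Sum.inr u ∧ b = Sum.inl v)
  symm := by
    refine ⟨?_⟩
    rintro a b (⟨u, v, rfl, rfl, h⟩ | ⟨u, v, rfl, rfl, h⟩ | ⟨u, v, rfl, rfl⟩ | ⟨u, v, rfl, rfl⟩)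
    · exact Or.inl ⟨v, u, rfl, rfl, h.symm⟩
    · exact Or.inr (Or.inl ⟨v, u, rfl, rfl, h.symm⟩)
    · exact Or.inr (Or.inr (Or.inr ⟨v, u, rfl, rfl⟩))
    · exact Or.inr (Or.inr (Or.inl ⟨v, u, rfl, rfl⟩))
  loopless := by
    refine ⟨?_⟩
    rintro a (⟨u, v, rfl, h, hadj⟩ | ⟨u, v, rfl, h, hadj⟩ | ⟨u, v, rfl, h⟩ | ⟨u, v, rfl, h⟩) <;>
      simp_all

/-- The graph obtained from `G` by a `k`-leaf support vertex addition at `v`: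
a new support vertex `w = Sum.inr none` is attached to `v`, and `k` new leaves
`Sum.inr (some i)` are attached to `w`. -/
def lsva (G : SimpleGraph V) (v : V) (k : ℕ) : SimpleGraph (V ⊕ Option (Fin k)) where
  Adj a b :=
    (∃ x y, a = Sum.inl x ∧ b = Sum.inl y ∧ G.Adj x y) ∨
    (a = Sum.inl v ∧ b = Sum.inr none) ∨
    (a = Sum.inr none ∧ b = Sum.inl v) ∨
    (∃ i : Fin k, a = Sum.inr none ∧ b = Sum.inr (some i)) ∨
    (∃ i : Fin k, a = Sum.inr (some i) ∧ b = Sum.inr none)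
  symm := by
    refine ⟨?_⟩
    rintro a b (⟨x, y, rfl, rfl, h⟩ | ⟨rfl, rfl⟩ | ⟨rfl, rfl⟩ | ⟨i, rfl, rfl⟩ | ⟨i, rfl, rfl⟩)
    · exact Or.inl ⟨y, x, rfl, rfl, h.symm⟩
    · exact Or.inr (Or.inr (Or.inl ⟨rfl, rfl⟩))
    · exact Or.inr (Or.inl ⟨rfl, rfl⟩)
    · exact Or.inr (Or.inr (Or.inr (Or.inr ⟨i, rfl, rfl⟩)))
    · exact Or.inr (Or.inr (Or.inr (Or.inl ⟨i, rfl, rfl⟩)))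
  loopless := by
    refine ⟨?_⟩
    rintro a (⟨x, y, rfl, h, hadj⟩ | ⟨rfl, h⟩ | ⟨rfl, h⟩ | ⟨i, rfl, h⟩ | ⟨i, rfl, h⟩) <;> simp_all

/-- `LSVAChain m G H` means `H` is obtained from `G` by a finite sequence of
`m`-leaf support vertex additions (each applied at a vertex of degree at most `m-1`). -/
inductive LSVAChain (m : ℕ) : {α : Type} → SimpleGraph α → {β : Type} → SimpleGraph β → Prop
  | refl {α : Type} (G : SimpleGraph α) : LSVAChain m G G
  | step {α : Type} {G : SimpleGraph α} {β : Type} {H : SimpleGraph β} (v : β)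
      (hv : (H.neighborSet v).ncard ≤ m - 1) :
      LSVAChain m G H → LSVAChain m G (lsva H v m)

/-- The graph obtained from the complete graph `K_n` by attaching one pendant
vertex to each vertex in the set `A`. -/
def pendantKn (n : ℕ) (A : Finset (Fin n)) : SimpleGraph (Fin n ⊕ {a : Fin n // a ∈ A}) where
  Adj a b :=
    (∃ x y : Fin n, a = Sum.inl x ∧ b = Sum.inl y ∧ x ≠ y) ∨
    (∃ p : {a : Fin n // a ∈ A}, a = Sum.inl p.1 ∧ b = Sum.inr p) ∨
    (∃ p : {a : Fin n // a ∈ A}, a = Sum.inr p ∧ b = Sum.inl p.1)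
  symm := by
    refine ⟨?_⟩
    rintro a b (⟨x, y, rfl, rfl, h⟩ | ⟨p, rfl, rfl⟩ | ⟨p, rfl, rfl⟩)
    · exact Or.inl ⟨y, x, rfl, rfl, h.symm⟩
    · exact Or.inr (Or.inr ⟨p, rfl, rfl⟩)
    · exact Or.inr (Or.inl ⟨p, rfl, rfl⟩)
  loopless := by
    refine ⟨?_⟩
    rintro a (⟨x, y, rfl, h, hne⟩ | ⟨p, rfl, h⟩ | ⟨p, rfl, h⟩) <;> simp_all

/-- The graph obtained from a cycle `C_k` with vertices `v_1, …, v_k` (the `Sum.inl`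
vertices) together with disjoint complete graphs `K_{n i}` (the `Sum.inr` vertices),
where every vertex of the `i`-th complete graph is joined to both `v_i` and `v_{i+1}`
(indices mod `k`). -/
def cycleCliques (k : ℕ) (n : Fin k → ℕ) :
    SimpleGraph (Fin k ⊕ Σ i : Fin k, Fin (n i)) where
  Adj a b :=
    match a, b with
    | Sum.inl i, Sum.inl j =>
        i ≠ j ∧ ((j : ℕ) = ((i : ℕ) + 1) % k ∨ (i : ℕ) = ((j : ℕ) + 1) % k)
    | Sum.inl j, Sum.inr s => (j : ℕ) = (s.1 : ℕ) ∨ (j : ℕ) = ((s.1 : ℕ) + 1) % k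
    | Sum.inr s, Sum.inl j => (j : ℕ) = (s.1 : ℕ) ∨ (j : ℕ) = ((s.1 : ℕ) + 1) % k
    | Sum.inr s, Sum.inr t => s ≠ t ∧ s.1 = t.1
  symm := by
    refine ⟨?_⟩
    rintro (i | s) (j | t) h
    · exact ⟨Ne.symm h.1, h.2.symm⟩
    · exact h
    · exact h
    · exact ⟨Ne.symm h.1, h.2.symm⟩
  loopless := by
    refine ⟨?_⟩
    rintro (i | s) h
    · exact h.1 rfl
    · exact h.1 rfl


/-- Two non-cover vertices related via a common cover neighbor. -/
def auxRel (G : SimpleGraph V) (C : Set V) (s t : V) : Prop :=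
  ∃ c ∈ C, (s ∉ C ∧ G.Adj c s) ∧ (t ∉ C ∧ G.Adj c t)

noncomputable def auxRep (G : SimpleGraph V) (C : Set V) (s : V) : V :=
  (Quotient.mk (Relation.EqvGen.setoid (auxRel G C)) s).out

lemma auxRep_spec (G : SimpleGraph V) (C : Set V) (s : V) :
    Relation.EqvGen (auxRel G C) s (auxRep G C s) :=
  Relation.EqvGen.symm _ _ (Quotient.mk_out (s := Relation.EqvGen.setoid (auxRel G C)) s)

lemma auxRep_congr {G : SimpleGraph V} {C : Set V} {s t : V}
    (h : Relation.EqvGen (auxRel G C) s t) : auxRep G C s = auxRep G C t := by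
  unfold auxRep
  rw [Quotient.sound (s := Relation.EqvGen.setoid (auxRel G C)) h]

lemma auxE_notC {G : SimpleGraph V} {C : Set V} {s t : V}
    (h : Relation.EqvGen (auxRel G C) s t) : s ∉ C ↔ t ∉ C := by
  induction h with
  | rel a b hab => obtain ⟨c, _, ⟨ha, _⟩, ⟨hb, _⟩⟩ := hab; simp [ha, hb]
  | refl => exact Iff.rfl
  | symm _ _ _ ih => exact ih.symm
  | trans _ _ _ _ _ ih1 ih2 => exact ih1.trans ih2

/-- For a connected claw-free graph on at least two vertices,
the zero forcing number is at most the vertex cover number. -/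
theorem stmt0 {V : Type*} [Fintype V] (G : SimpleGraph V)
    (hconn : G.Connected) (hclaw : ClawFree G) (hcard : 2 ≤ Fintype.card V) :
    zfNum G ≤ vcNum G := by
  classical
  have hne : ({m : ℕ | ∃ C : Set V, IsVC G C ∧ C.ncard = m}).Nonempty :=
    ⟨(Set.univ : Set V).ncard, Set.univ, fun u w _ => Or.inl trivial, rfl⟩
  obtain ⟨C, hC, hCcard⟩ : ∃ C : Set V, IsVC G C ∧ C.ncard = vcNum G := Nat.sInf_mem hne
  -- every vertex has a neighbor
  have hnbr : ∀ v : V, ∃ w, G.Adj v w := by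
    intro v
    obtain ⟨u, hu⟩ := Fintype.exists_ne_of_one_lt_card (by omega) v
    obtain ⟨p⟩ := hconn v u
    cases p with
    | nil => exact absurd rfl hu
    | cons h _ => exact ⟨_, h⟩
  have hSind : ∀ ⦃u w : V⦄, u ∉ C → w ∉ C → ¬ G.Adj u w := fun u w hu hw h =>
    (hC h).elim hu hw
  have hcov0 : ∀ s : V, ∃ c, s ∉ C → c ∈ C ∧ G.Adj c s := by
    intro s
    by_cases hs : s ∉ C
    · obtain ⟨w, hw⟩ := hnbr s
      exact ⟨w, fun _ => ⟨(hC hw).resolve_left hs, hw.symm⟩⟩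
    · exact ⟨s, fun h => absurd h hs⟩
  choose cov hcov using hcov0
  -- claw-free: at most two non-cover neighbors
  have htwo : ∀ c ∈ C, ∀ a b d : V, a ∉ C → G.Adj c a → b ∉ C → G.Adj c b →
      d ∉ C → G.Adj c d → (a = b ∨ a = d ∨ b = d) := by
    intro c hc a b d ha hca hb hcb hd hcd
    by_contra hcon
    push_neg at hcon
    obtain ⟨hab, had, hbd⟩ := hcon
    exact hclaw ⟨c, a, b, d, hca, hcb, hcd, hab, had, hbd,
      hSind ha hb, hSind ha hd, hSind hb hd⟩
  -- the blue set
  let Bad : Set V := {s | s ∉ C ∧ ¬ ∃ t, Relation.EqvGen (auxRel G C) s t ∧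
      ∃ c ∈ C, (t ∉ C ∧ G.Adj c t) ∧ ∀ x, x ∉ C → G.Adj c x → x = t}
  let T : Set V := auxRep G C '' Bad
  let D : Set V := cov '' T
  let B : Set V := (C \ D) ∪ T
  have hTS : ∀ t ∈ T, t ∉ C := by
    rintro t ⟨s, hsB, rfl⟩
    exact (auxE_notC (auxRep_spec G C s)).mp hsB.1
  have hTrep : ∀ t ∈ T, auxRep G C t = t := by
    rintro t ⟨s, _, rfl⟩
    exact (auxRep_congr (auxRep_spec G C s)).symm
  have hDC : D ⊆ C := by
    rintro d ⟨t, htT, rfl⟩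
    exact (hcov t (hTS t htT)).1
  have hcovT : ∀ t ∈ T, G.Adj (cov t) t := fun t ht => (hcov t (hTS t ht)).2
  have hinj : Set.InjOn cov T := by
    intro t ht t' ht' hcc
    have h1 : auxRel G C t t' :=
      ⟨cov t, (hcov t (hTS t ht)).1, ⟨hTS t ht, hcovT t ht⟩,
        ⟨hTS t' ht', hcc ▸ hcovT t' ht'⟩⟩
    have h2 := auxRep_congr (Relation.EqvGen.rel _ _ h1)
    rw [hTrep t ht, hTrep t' ht'] at h2
    exact h2
  -- all cover vertices get forced
  have hCF : ∀ c ∈ C, Forced G B c := by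
    intro c hc
    by_cases hcD : c ∈ D
    · obtain ⟨t, htT, rfl⟩ := hcD
      refine Forced.force t (cov t) (Forced.init t (Or.inr htT)) (hcovT t htT).symm ?_
      intro x hx hxc
      have hxC : x ∈ C := (hC hx).resolve_left (hTS t htT)
      by_cases hxD : x ∈ D
      · obtain ⟨t', ht'T, rfl⟩ := hxD
        exfalso
        have h1 : auxRel G C t t' :=
          ⟨cov t', hxC, ⟨hTS t htT, hx.symm⟩, ⟨hTS t' ht'T, hcovT t' ht'T⟩⟩
        have h2 := auxRep_congr (Relation.EqvGen.rel _ _ h1)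
        rw [hTrep t htT, hTrep t' ht'T] at h2
        exact hxc (congrArg cov h2.symm)
      · exact Forced.init x (Or.inl ⟨hxC, hxD⟩)
    · exact Forced.init c (Or.inl ⟨hc, hcD⟩)
  -- propagation along the auxiliary relation
  have hP : ∀ s t : V, auxRel G C s t → Forced G B s → Forced G B t := by
    rintro s t ⟨c, hc, ⟨hsS, hcs⟩, ⟨htS, hct⟩⟩ hFs
    by_cases hst : s = t
    · exact hst ▸ hFs
    refine Forced.force c t (hCF c hc) hct ?_
    intro x hcx hxt
    by_cases hxC : x ∈ C
    · exact hCF x hxC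
    · rcases htwo c hc s t x hsS hcs htS hct hxC hcx with h | h | h
      · exact absurd h hst
      · exact h ▸ hFs
      · exact absurd h.symm hxt
  have hE : ∀ s t : V, Relation.EqvGen (auxRel G C) s t →
      (Forced G B s ↔ Forced G B t) := by
    intro s t h
    induction h with
    | rel a b hab =>
        obtain ⟨c, hc, h1, h2⟩ := hab
        exact ⟨hP a b ⟨c, hc, h1, h2⟩, hP b a ⟨c, hc, h2, h1⟩⟩
    | refl => exact Iff.rfl
    | symm _ _ _ ih => exact ih.symm
    | trans _ _ _ _ _ ih1 ih2 => exact ih1.trans ih2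
  -- all non-cover vertices get forced
  have hSF : ∀ s, s ∉ C → Forced G B s := by
    intro s hs
    by_cases hH : ∃ t, Relation.EqvGen (auxRel G C) s t ∧
        ∃ c ∈ C, (t ∉ C ∧ G.Adj c t) ∧ ∀ x, x ∉ C → G.Adj c x → x = t
    · obtain ⟨t, hst, c, hc, ⟨htS, hct⟩, huniq⟩ := hH
      have hFt : Forced G B t := by
        refine Forced.force c t (hCF c hc) hct ?_
        intro x hcx hxt
        by_cases hxC : x ∈ C
        · exact hCF x hxC
        · exact absurd (huniq x hxC hcx) hxt
      exact (hE s t hst).mpr hFt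
    · have hsT : auxRep G C s ∈ T := ⟨s, ⟨hs, hH⟩, rfl⟩
      exact (hE s _ (auxRep_spec G C s)).mpr (Forced.init _ (Or.inr hsT))
  have hZFS : IsZFS G B := fun v => by
    by_cases hv : v ∈ C
    · exact hCF v hv
    · exact hSF v hv
  -- cardinality
  have hBcard : B.ncard ≤ C.ncard := by
    have h1 : B.ncard ≤ (C \ D).ncard + T.ncard := Set.ncard_union_le _ _
    have h2 : (C \ D).ncard = C.ncard - D.ncard := Set.ncard_diff hDC (Set.toFinite D)
    have h3 : D.ncard = T.ncard := Set.ncard_image_of_injOn hinj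
    have h4 : D.ncard ≤ C.ncard := Set.ncard_le_ncard hDC (Set.toFinite C)
    omega
  calc zfNum G ≤ B.ncard := Nat.sInf_le ⟨B, hZFS, rfl⟩
    _ ≤ C.ncard := hBcard
    _ = vcNum G := hCcard


end ZFPaper
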